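/- For every (a,b;c,d) ∈ SL₂(ℤ), every τ ∈ ℍ and every z ∈ ℂ, one has Z⁽³⁾((aτ+b)/(cτ+d), z/(cτ+d)) = e^{4πi c z²/(cτ+d)}·Z⁽³⁾(τ,z); and for all λ, μ ∈ ℤ one has Z⁽³⁾(τ, z + λτ + μ) = e^{−4πi(λ²τ + 2λz)}·Z⁽³⁾(τ,z). That is, Z⁽³⁾ is a (weakly holomorphic) Jacobi form of weight 0 and index 2 for SL₂(ℤ). -/

import Mathlib

open Complex
open MatrixGroups

/-- The theta series `θ_{m,r}(τ,z) = Σ_{s ≡ r mod 2m} q^{s²/4m} yˢ`, with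
`q = e^{2πiτ}`, `y = e^{2πiz}`. -/
noncomputable def jacTheta (m : ℕ) (r : ℤ) (τ z : ℂ) : ℂ :=
  ∑' s : ℤ,
    if s % (2 * (m : ℤ)) = r % (2 * (m : ℤ)) then
      Complex.exp (2 * Real.pi * I * (((s : ℂ) ^ 2 / (4 * (m : ℂ))) * τ + (s : ℂ) * z))
    else 0

/-- The Jacobi theta function `ϑ₁(τ,z) = -θ_{1,1}(τ/2, (z+1/2)/2)`. -/
noncomputable def theta1 (τ z : ℂ) : ℂ := -jacTheta 1 1 (τ / 2) ((z + 1 / 2) / 2)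

/-- The Jacobi theta function `ϑ₂(τ,z) = θ_{1,1}(τ/2, z/2)`. -/
noncomputable def theta2 (τ z : ℂ) : ℂ := jacTheta 1 1 (τ / 2) (z / 2)

/-- The Jacobi theta function `ϑ₃(τ,z) = θ_{1,0}(τ/2, z/2)`. -/
noncomputable def theta3 (τ z : ℂ) : ℂ := jacTheta 1 0 (τ / 2) (z / 2)

/-- The Jacobi theta function `ϑ₄(τ,z) = θ_{1,0}(τ/2, (z+1/2)/2)`. -/
noncomputable def theta4 (τ z : ℂ) : ℂ := jacTheta 1 0 (τ / 2) ((z + 1 / 2) / 2)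

/-- The weight `0`, index `2` weakly holomorphic Jacobi form `Z⁽³⁾` of umbral
moonshine at `ℓ = 3`. -/
noncomputable def Z3 (τ z : ℂ) : ℂ :=
  4 * (theta2 τ z ^ 2 * theta3 τ z ^ 2 / (theta2 τ 0 ^ 2 * theta3 τ 0 ^ 2) +
       theta3 τ z ^ 2 * theta4 τ z ^ 2 / (theta3 τ 0 ^ 2 * theta4 τ 0 ^ 2) +
       theta4 τ z ^ 2 * theta2 τ z ^ 2 / (theta4 τ 0 ^ 2 * theta2 τ 0 ^ 2))

/-- `Z⁽³⁾` is a (weakly holomorphic) Jacobi form of weight `0` and index `2`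
for `SL₂(ℤ)`: for every `(a,b;c,d) ∈ SL₂(ℤ)`, every `τ ∈ ℍ` and every `z ∈ ℂ`,
`Z⁽³⁾((aτ+b)/(cτ+d), z/(cτ+d)) = e^{4πi c z²/(cτ+d)}·Z⁽³⁾(τ,z)`, and for all
`λ, μ ∈ ℤ`, `Z⁽³⁾(τ, z+λτ+μ) = e^{-4πi(λ²τ+2λz)}·Z⁽³⁾(τ,z)`. -/
lemma theta3_eq (τ z : ℂ) : theta3 τ z = jacobiTheta₂ z τ := by
  rw [theta3, jacTheta, jacobiTheta₂]
  norm_num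
  rw [← Function.Injective.tsum_eq (g := fun n : ℤ => 2 * n)
      (fun a b h => by simp only [] at h; omega) (f := fun s : ℤ => if 2 ∣ s then
        Complex.exp (2 * Real.pi * I * (((s : ℂ) ^ 2 / 4) * (τ/2) + (s : ℂ) * (z/2)))
      else 0) ?_]
  · push_cast
    refine tsum_congr fun n => ?_
    rw [if_pos (by omega)]
    rw [jacobiTheta₂_term]
    congr 1
    push_cast
    field_simp
    ring
  · intro s hs
    simp only [Function.mem_support, ne_eq, ite_eq_right_iff, not_forall] at hs
    obtain ⟨h1, -⟩ := hs
    exact ⟨s / 2, show _ = s by simp only []; omega⟩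

lemma theta4_eq (τ z : ℂ) : theta4 τ z = jacobiTheta₂ (z + 1/2) τ := by
  have : theta4 τ z = theta3 τ (z + 1/2) := rfl
  rw [this, theta3_eq]

lemma theta2_eq (τ z : ℂ) : theta2 τ z =
    Complex.exp (Real.pi * I * τ / 4 + Real.pi * I * z) * jacobiTheta₂ (z + τ/2) τ := by
  rw [theta2, jacTheta, jacobiTheta₂, ← tsum_mul_left]
  norm_num
  rw [← Function.Injective.tsum_eq (g := fun n : ℤ => 2 * n + 1)
      (fun a b h => by simp only [] at h; omega) (f := fun s : ℤ => if s % 2 = 1 then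
        Complex.exp (2 * Real.pi * I * (((s : ℂ) ^ 2 / 4) * (τ/2) + (s : ℂ) * (z/2)))
      else 0) ?_]
  · push_cast
    refine tsum_congr fun n => ?_
    rw [if_pos (by omega)]
    rw [jacobiTheta₂_term, ← Complex.exp_add]
    congr 1
    push_cast
    field_simp
    ring
  · intro s hs
    simp only [Function.mem_support, ne_eq, ite_eq_right_iff, not_forall] at hs
    obtain ⟨h1, -⟩ := hs
    exact ⟨s / 2, show _ = s by simp only []; omega⟩

lemma jt2_add_int (w τ : ℂ) (n : ℤ) : jacobiTheta₂ (w + n) τ = jacobiTheta₂ w τ := by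
  refine tsum_congr fun m => ?_
  rw [jacobiTheta₂_term, jacobiTheta₂_term,
    show 2 * (Real.pi:ℂ) * I * m * (w + n) + Real.pi * I * m ^ 2 * τ
      = (2 * Real.pi * I * m * w + Real.pi * I * m ^ 2 * τ) + (m * n : ℤ) * (2 * Real.pi * I) by
      push_cast; ring,
    Complex.exp_add, Complex.exp_int_mul_two_pi_mul_I, mul_one]

lemma jt2_add_int_mul (w τ : ℂ) (n : ℤ) :
    jacobiTheta₂ (w + n * τ) τ
      = Complex.exp (-(Real.pi:ℂ) * I * ((n:ℂ)^2 * τ + 2 * n * w)) * jacobiTheta₂ w τ := by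
  induction n using Int.induction_on with
  | zero => simp
  | succ n ih =>
      have : w + ((n:ℤ)+1 : ℤ) * τ = (w + (n:ℤ) * τ) + τ := by push_cast; ring
      rw [this, jacobiTheta₂_add_left', ih, ← mul_assoc, ← Complex.exp_add]
      congr 1
      push_cast
      ring
  | pred n ih =>
      have key : jacobiTheta₂ ((w + (-(n:ℤ)-1 : ℤ) * τ) + τ) τ
          = Complex.exp (-(Real.pi:ℂ) * I * (τ + 2 * (w + ((-(n:ℤ)-1 : ℤ):ℂ) * τ)))
            * jacobiTheta₂ (w + (-(n:ℤ)-1 : ℤ) * τ) τ := jacobiTheta₂_add_left' _ _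
      have h2 : (w + (-(n:ℤ)-1 : ℤ) * τ) + τ = w + (-(n:ℤ) : ℤ) * τ := by push_cast; ring
      rw [h2, ih] at key
      refine mul_left_cancel₀ (Complex.exp_ne_zero (-(Real.pi:ℂ) * I * (τ + 2 * (w + ((-(n:ℤ)-1 : ℤ):ℂ) * τ)))) ?_
      rw [← key, ← mul_assoc, ← Complex.exp_add]
      congr 2
      push_cast
      ring

lemma cexp_shift {a b : ℂ} (n : ℤ) (h : a = b + n * (2 * Real.pi * I)) :
    Complex.exp a = Complex.exp b := by
  rw [h, Complex.exp_add, Complex.exp_int_mul_two_pi_mul_I, mul_one]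

lemma theta3_sq_elliptic (τ z : ℂ) (lam mu : ℤ) :
    theta3 τ (z + lam * τ + mu) ^ 2
      = Complex.exp (-(2 * Real.pi * I) * ((lam:ℂ)^2 * τ + 2 * lam * z)) * theta3 τ z ^ 2 := by
  rw [theta3_eq, theta3_eq, show z + (lam:ℂ) * τ + mu = (z + lam * τ) + mu by ring,
    jt2_add_int, jt2_add_int_mul, mul_pow, sq (Complex.exp _), ← Complex.exp_add]
  congr 2
  ring

lemma theta4_sq_elliptic (τ z : ℂ) (lam mu : ℤ) :
    theta4 τ (z + lam * τ + mu) ^ 2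
      = Complex.exp (-(2 * Real.pi * I) * ((lam:ℂ)^2 * τ + 2 * lam * z)) * theta4 τ z ^ 2 := by
  rw [theta4_eq, theta4_eq, show z + (lam:ℂ) * τ + mu + 1/2 = ((z + 1/2) + lam * τ) + mu by ring,
    jt2_add_int, jt2_add_int_mul, mul_pow, sq (Complex.exp _), ← Complex.exp_add]
  congr 1
  exact cexp_shift (-lam) (by push_cast; ring)

lemma theta2_sq_elliptic (τ z : ℂ) (lam mu : ℤ) :
    theta2 τ (z + lam * τ + mu) ^ 2
      = Complex.exp (-(2 * Real.pi * I) * ((lam:ℂ)^2 * τ + 2 * lam * z)) * theta2 τ z ^ 2 := by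
  rw [theta2_eq, theta2_eq, show z + (lam:ℂ) * τ + mu + τ/2 = ((z + τ/2) + lam * τ) + mu by ring,
    jt2_add_int, jt2_add_int_mul]
  have h : Complex.exp (Real.pi * I * τ / 4 + Real.pi * I * (z + lam * τ + mu)) ^ 2 *
        Complex.exp (-(Real.pi:ℂ) * I * ((lam:ℂ)^2 * τ + 2 * lam * (z + τ/2))) ^ 2
      = Complex.exp (-(2 * Real.pi * I) * ((lam:ℂ)^2 * τ + 2 * lam * z)) *
        Complex.exp (Real.pi * I * τ / 4 + Real.pi * I * z) ^ 2 := by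
    rw [sq (Complex.exp _), sq (Complex.exp _), sq (Complex.exp _), ← Complex.exp_add,
      ← Complex.exp_add, ← Complex.exp_add, ← Complex.exp_add, ← Complex.exp_add]
    apply cexp_shift mu
    push_cast
    ring
  calc (Complex.exp (Real.pi * I * τ / 4 + Real.pi * I * (z + lam * τ + mu)) *
        (Complex.exp (-(Real.pi:ℂ) * I * ((lam:ℂ)^2 * τ + 2 * lam * (z + τ/2))) *
          jacobiTheta₂ (z + τ/2) τ)) ^ 2
      = (Complex.exp (Real.pi * I * τ / 4 + Real.pi * I * (z + lam * τ + mu)) ^ 2 *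
        Complex.exp (-(Real.pi:ℂ) * I * ((lam:ℂ)^2 * τ + 2 * lam * (z + τ/2))) ^ 2) *
          jacobiTheta₂ (z + τ/2) τ ^ 2 := by ring
    _ = (Complex.exp (-(2 * Real.pi * I) * ((lam:ℂ)^2 * τ + 2 * lam * z)) *
        Complex.exp (Real.pi * I * τ / 4 + Real.pi * I * z) ^ 2) *
          jacobiTheta₂ (z + τ/2) τ ^ 2 := by rw [h]
    _ = _ := by ring

lemma Z3_elliptic (τ z : ℂ) (lam mu : ℤ) :
    Z3 τ (z + lam * τ + mu)
      = Complex.exp (-(4 * Real.pi * I) * ((lam:ℂ)^2 * τ + 2 * lam * z)) * Z3 τ z := by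
  rw [Z3, Z3, theta2_sq_elliptic, theta3_sq_elliptic, theta4_sq_elliptic]
  rw [show Complex.exp (-(4 * Real.pi * I) * ((lam:ℂ)^2 * τ + 2 * lam * z))
      = Complex.exp (-(2 * Real.pi * I) * ((lam:ℂ)^2 * τ + 2 * lam * z)) *
        Complex.exp (-(2 * Real.pi * I) * ((lam:ℂ)^2 * τ + 2 * lam * z)) by
    rw [← Complex.exp_add]; ring_nf]
  ring

lemma jt2_tau_add_one (w τ : ℂ) : jacobiTheta₂ w (τ + 1) = jacobiTheta₂ (w + 1/2) τ := by
  refine tsum_congr fun m => ?_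
  rw [jacobiTheta₂_term, jacobiTheta₂_term]
  obtain ⟨k, hk⟩ : Even (m^2 - m) := by
    have : m^2 - m = m * (m - 1) := by ring
    rw [this]
    exact Int.even_mul_pred_self m
  apply cexp_shift k
  have hk' : (m:ℂ)^2 - m = k + k := by exact_mod_cast hk
  push_cast
  linear_combination (Real.pi : ℂ) * I * hk'

lemma theta3_T (τ z : ℂ) : theta3 (τ + 1) z = theta4 τ z := by
  rw [theta3_eq, theta4_eq, jt2_tau_add_one]

lemma theta4_T (τ z : ℂ) : theta4 (τ + 1) z = theta3 τ z := by
  rw [theta4_eq, theta3_eq, jt2_tau_add_one,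
    show z + 1/2 + 1/2 = z + ((1:ℤ):ℂ) by push_cast; ring, jt2_add_int]

lemma theta2_T (τ z : ℂ) : theta2 (τ + 1) z = Complex.exp (Real.pi * I / 4) * theta2 τ z := by
  rw [theta2_eq, theta2_eq, jt2_tau_add_one,
    show z + (τ + 1)/2 + 1/2 = (z + τ/2) + ((1:ℤ):ℂ) by push_cast; ring, jt2_add_int,
    ← mul_assoc, ← Complex.exp_add]
  congr 2
  ring

lemma Z3_T (τ z : ℂ) : Z3 (τ + 1) z = Z3 τ z := by
  have hc : Complex.exp ((Real.pi:ℂ) * I / 4) ^ 2 ≠ 0 := pow_ne_zero _ (Complex.exp_ne_zero _)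
  rw [Z3, Z3]
  simp only [theta2_T, theta3_T, theta4_T]
  rw [show (Complex.exp ((Real.pi:ℂ) * I / 4) * theta2 τ z) ^ 2 * theta4 τ z ^ 2
      = Complex.exp ((Real.pi:ℂ) * I / 4) ^ 2 * (theta2 τ z ^ 2 * theta4 τ z ^ 2) by ring,
    show (Complex.exp ((Real.pi:ℂ) * I / 4) * theta2 τ 0) ^ 2 * theta4 τ 0 ^ 2
      = Complex.exp ((Real.pi:ℂ) * I / 4) ^ 2 * (theta2 τ 0 ^ 2 * theta4 τ 0 ^ 2) by ring,
    mul_div_mul_left _ _ hc,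
    show theta3 τ z ^ 2 * (Complex.exp ((Real.pi:ℂ) * I / 4) * theta2 τ z) ^ 2
      = Complex.exp ((Real.pi:ℂ) * I / 4) ^ 2 * (theta3 τ z ^ 2 * theta2 τ z ^ 2) by ring,
    show theta3 τ 0 ^ 2 * (Complex.exp ((Real.pi:ℂ) * I / 4) * theta2 τ 0) ^ 2
      = Complex.exp ((Real.pi:ℂ) * I / 4) ^ 2 * (theta3 τ 0 ^ 2 * theta2 τ 0 ^ 2) by ring,
    mul_div_mul_left _ _ hc]
  ring

lemma jt2_S {τ : ℂ} (hτ : 0 < τ.im) (w : ℂ) :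
    jacobiTheta₂ w (-1/τ) = (-I*τ)^(1/2:ℂ) * Complex.exp (Real.pi * I * w^2 * τ) *
      jacobiTheta₂ (w * τ) τ := by
  have h0 : τ ≠ 0 := fun h => by simp [h] at hτ
  have hA : ((-I*τ):ℂ)^(1/2:ℂ) ≠ 0 := by
    rw [Ne, Complex.cpow_eq_zero_iff]
    push_neg
    intro h
    exact absurd h (mul_ne_zero (neg_ne_zero.mpr I_ne_zero) h0)
  conv_rhs => rw [jacobiTheta₂_functional_equation (w * τ) τ]
  rw [mul_div_cancel_right₀ w h0,
    show -(Real.pi:ℂ) * I * (w * τ)^2 / τ = -(Real.pi * I * w^2 * τ) by field_simp,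
    Complex.exp_neg]
  field_simp

lemma theta3_S {τ : ℂ} (hτ : 0 < τ.im) (z : ℂ) :
    theta3 (-1/τ) (z/τ) = (-I*τ)^(1/2:ℂ) * Complex.exp (Real.pi * I * z^2 / τ) *
      theta3 τ z := by
  have h0 : τ ≠ 0 := fun h => by simp [h] at hτ
  rw [theta3_eq, theta3_eq, jt2_S hτ, div_mul_cancel₀ _ h0,
    show (Real.pi:ℂ) * I * (z/τ)^2 * τ = Real.pi * I * z^2 / τ by field_simp]

lemma theta4_S {τ : ℂ} (hτ : 0 < τ.im) (z : ℂ) :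
    theta4 (-1/τ) (z/τ) = (-I*τ)^(1/2:ℂ) * Complex.exp (Real.pi * I * z^2 / τ) *
      theta2 τ z := by
  have h0 : τ ≠ 0 := fun h => by simp [h] at hτ
  rw [theta4_eq, jt2_S hτ, theta2_eq,
    show (z/τ + 1/2) * τ = z + τ/2 by field_simp]
  rw [show (-I*τ)^(1/2:ℂ) * Complex.exp (Real.pi * I * z^2 / τ) *
      (Complex.exp (Real.pi * I * τ / 4 + Real.pi * I * z) * jacobiTheta₂ (z + τ/2) τ)
    = (-I*τ)^(1/2:ℂ) * (Complex.exp (Real.pi * I * z^2 / τ) *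
      Complex.exp (Real.pi * I * τ / 4 + Real.pi * I * z)) * jacobiTheta₂ (z + τ/2) τ by ring,
    ← Complex.exp_add]
  congr 3
  field_simp
  ring

lemma theta2_S {τ : ℂ} (hτ : 0 < τ.im) (z : ℂ) :
    theta2 (-1/τ) (z/τ) = (-I*τ)^(1/2:ℂ) * Complex.exp (Real.pi * I * z^2 / τ) *
      theta4 τ z := by
  have h0 : τ ≠ 0 := fun h => by simp [h] at hτ
  rw [theta2_eq, jt2_S hτ,
    show (z/τ + (-1/τ)/2) * τ = (z + 1/2) + ((-1 : ℤ):ℂ) by push_cast; field_simp; ring,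
    jt2_add_int, ← theta4_eq]
  rw [show Complex.exp (Real.pi * I * (-1/τ) / 4 + Real.pi * I * (z/τ)) *
      ((-I*τ)^(1/2:ℂ) * Complex.exp (Real.pi * I * (z/τ + (-1/τ)/2)^2 * τ) * theta4 τ z)
    = (-I*τ)^(1/2:ℂ) * (Complex.exp (Real.pi * I * (-1/τ) / 4 + Real.pi * I * (z/τ)) *
      Complex.exp (Real.pi * I * (z/τ + (-1/τ)/2)^2 * τ)) * theta4 τ z by ring,
    ← Complex.exp_add]
  congr 3
  field_simp
  ring

lemma aux_div (A E x y u v : ℂ) (hA : A ≠ 0) :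
    (A*E*x)^2*(A*E*y)^2/((A*u)^2*(A*v)^2) = E^4 * (x^2*y^2/(u^2*v^2)) := by
  have hA4 : A^4 ≠ 0 := pow_ne_zero _ hA
  rw [show (A*E*x)^2*(A*E*y)^2 = A^4 * (E^4 * (x^2*y^2)) by ring,
    show (A*u)^2*(A*v)^2 = A^4 * (u^2*v^2) by ring,
    mul_div_mul_left _ _ hA4, mul_div_assoc]

lemma Z3_S {τ : ℂ} (hτ : 0 < τ.im) (z : ℂ) :
    Z3 (-1/τ) (z/τ) = Complex.exp (4 * Real.pi * I * z^2 / τ) * Z3 τ z := by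
  have h0 : τ ≠ 0 := fun h => by simp [h] at hτ
  have hA : ((-I*τ):ℂ)^(1/2:ℂ) ≠ 0 := by
    rw [Ne, Complex.cpow_eq_zero_iff]
    push_neg
    intro h
    exact absurd h (mul_ne_zero (neg_ne_zero.mpr I_ne_zero) h0)
  have e2 := theta2_S hτ z
  have e3 := theta3_S hτ z
  have e4 := theta4_S hτ z
  have e20 := theta2_S hτ 0
  have e30 := theta3_S hτ 0
  have e40 := theta4_S hτ 0
  simp only [zero_div, ne_eq, OfNat.ofNat_ne_zero, not_false_eq_true, zero_pow, mul_zero,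
    zero_div, Complex.exp_zero, mul_one] at e20 e30 e40
  rw [Z3, Z3, e2, e3, e4, e20, e30, e40]
  rw [aux_div _ _ _ _ _ _ hA, aux_div _ _ _ _ _ _ hA, aux_div _ _ _ _ _ _ hA]
  rw [show Complex.exp (4 * Real.pi * I * z^2 / τ)
      = Complex.exp (Real.pi * I * z^2 / τ)^4 by
    rw [← Complex.exp_nat_mul]; congr 1; push_cast; ring]
  ring

open MatrixGroups

noncomputable def mc (γ : Matrix.SpecialLinearGroup (Fin 2) ℤ) (i j : Fin 2) : ℂ :=
  (((γ : Matrix (Fin 2) (Fin 2) ℤ) i j : ℤ) : ℂ)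

lemma det_c (γ : SL(2,ℤ)) : mc γ 0 0 * mc γ 1 1 - mc γ 0 1 * mc γ 1 0 = 1 := by
  have h := γ.2
  rw [Matrix.det_fin_two] at h
  simp only [mc]
  exact_mod_cast congrArg (Int.cast : ℤ → ℂ) h

lemma denom_ne {τ : ℂ} (γ : SL(2,ℤ)) (hτ : 0 < τ.im) : mc γ 1 0 * τ + mc γ 1 1 ≠ 0 := by
  intro h
  have him : (mc γ 1 0 * τ + mc γ 1 1).im = 0 := by rw [h]; rfl
  simp only [mc, Complex.add_im, Complex.mul_im, Complex.intCast_im, Complex.intCast_re,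
    zero_mul, add_zero, mul_zero] at him
  have hc : ((γ : Matrix (Fin 2) (Fin 2) ℤ) 1 0 : ℝ) = 0 := by
    rcases mul_eq_zero.mp (by linarith : ((γ : Matrix (Fin 2) (Fin 2) ℤ) 1 0 : ℝ) * τ.im = 0)
      with h' | h'
    · exact h'
    · exact absurd h' (ne_of_gt hτ)
  have hc' : (γ : Matrix (Fin 2) (Fin 2) ℤ) 1 0 = 0 := by exact_mod_cast hc
  have hre : (mc γ 1 0 * τ + mc γ 1 1).re = 0 := by rw [h]; rfl
  simp only [mc, hc', Complex.add_re, Complex.mul_re, Complex.intCast_re, Complex.intCast_im,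
    Int.cast_zero, zero_mul, sub_zero, add_zero, mul_zero, zero_add] at hre
  have hd : (γ : Matrix (Fin 2) (Fin 2) ℤ) 1 1 = 0 := by exact_mod_cast hre
  have h2 := γ.2
  rw [Matrix.det_fin_two, hc', hd] at h2
  simp at h2

lemma im_transform {τ : ℂ} (γ : SL(2,ℤ)) (hτ : 0 < τ.im) :
    0 < (((mc γ 0 0 * τ + mc γ 0 1) / (mc γ 1 0 * τ + mc γ 1 1))).im := by
  have hd := denom_ne γ hτ
  rw [Complex.div_im]
  have hns : 0 < Complex.normSq (mc γ 1 0 * τ + mc γ 1 1) := by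
    rcases (Complex.normSq_pos).mpr hd with h; exact h
  have key : (mc γ 0 0 * τ + mc γ 0 1).im * (mc γ 1 0 * τ + mc γ 1 1).re -
      (mc γ 0 0 * τ + mc γ 0 1).re * (mc γ 1 0 * τ + mc γ 1 1).im = τ.im := by
    have h := γ.2
    rw [Matrix.det_fin_two] at h
    have hdet : ((γ : Matrix (Fin 2) (Fin 2) ℤ) 0 0 : ℝ) * ((γ : Matrix (Fin 2) (Fin 2) ℤ) 1 1 : ℝ)
        - ((γ : Matrix (Fin 2) (Fin 2) ℤ) 0 1 : ℝ) * ((γ : Matrix (Fin 2) (Fin 2) ℤ) 1 0 : ℝ)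
        = 1 := by exact_mod_cast congrArg (Int.cast : ℤ → ℝ) h
    simp only [mc, Complex.add_im, Complex.add_re, Complex.mul_im, Complex.mul_re,
      Complex.intCast_im, Complex.intCast_re, zero_mul, add_zero, mul_zero, sub_zero]
    nlinarith [hdet]
  rw [div_sub_div_same, key]
  positivity

def JP (γ : SL(2,ℤ)) : Prop :=
  ∀ τ z : ℂ, 0 < τ.im →
    Z3 ((mc γ 0 0 * τ + mc γ 0 1) / (mc γ 1 0 * τ + mc γ 1 1)) (z / (mc γ 1 0 * τ + mc γ 1 1))
      = Complex.exp (4 * Real.pi * I * mc γ 1 0 * z ^ 2 / (mc γ 1 0 * τ + mc γ 1 1)) * Z3 τ z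

lemma JP_T : JP ModularGroup.T := by
  intro τ z hτ
  have e : ∀ i j, mc ModularGroup.T i j = !![(1:ℂ), 1; 0, 1] i j := by
    intro i j
    fin_cases i <;> fin_cases j <;> simp [mc, ModularGroup.T]
  simp only [e]
  norm_num [Z3_T]

lemma JP_S : JP ModularGroup.S := by
  intro τ z hτ
  have e : ∀ i j, mc ModularGroup.S i j = !![(0:ℂ), -1; 1, 0] i j := by
    intro i j
    fin_cases i <;> fin_cases j <;> simp [mc, ModularGroup.S]
  simp only [e]
  norm_num
  rw [show (-1 : ℂ)/τ = -1/τ by ring, Z3_S hτ z]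

lemma JP_Tinv : JP (ModularGroup.T)⁻¹ := by
  intro τ z hτ
  have e : ∀ i j, mc (ModularGroup.T)⁻¹ i j = !![(1:ℂ), -1; 0, 1] i j := by
    intro i j
    fin_cases i <;> fin_cases j <;>
      simp [mc, ModularGroup.coe_T, Matrix.adjugate_fin_two]
  simp only [e]
  norm_num
  have := Z3_T (τ - 1) z
  rw [show τ - 1 + 1 = τ by ring] at this
  rw [show τ + -1 = τ - 1 by ring, this]

lemma JP_one : JP 1 := by
  intro τ z hτ
  have e : ∀ i j, mc 1 i j = !![(1:ℂ), 0; 0, 1] i j := by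
    intro i j
    fin_cases i <;> fin_cases j <;> simp [mc]
  simp only [e]
  norm_num

lemma mc_mul (α β : SL(2,ℤ)) (i j : Fin 2) :
    mc (α * β) i j = mc α i 0 * mc β 0 j + mc α i 1 * mc β 1 j := by
  simp only [mc, Matrix.SpecialLinearGroup.coe_mul, Matrix.mul_apply, Fin.sum_univ_two]
  push_cast
  ring

lemma JP_mul {α β : SL(2,ℤ)} (hα : JP α) (hβ : JP β) : JP (α * β) := by
  intro τ z hτ
  have hdβ : mc β 1 0 * τ + mc β 1 1 ≠ 0 := denom_ne β hτ
  set τ' : ℂ := (mc β 0 0 * τ + mc β 0 1) / (mc β 1 0 * τ + mc β 1 1) with hτ'def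
  have hτ' : 0 < τ'.im := im_transform β hτ
  have hdα : mc α 1 0 * τ' + mc α 1 1 ≠ 0 := denom_ne α hτ'
  have hdetβ := det_c β
  have hDD : (mc α 1 0 * τ' + mc α 1 1) * (mc β 1 0 * τ + mc β 1 1)
      = mc α 1 0 * (mc β 0 0 * τ + mc β 0 1) + mc α 1 1 * (mc β 1 0 * τ + mc β 1 1) := by
    rw [hτ'def]
    field_simp
    have h' : τ * mc β 1 0 + mc β 1 1 ≠ 0 := by rwa [mul_comm τ]
    rw [mul_comm (τ * mc β 1 0 + mc β 1 1), add_mul, div_mul_cancel₀ _ h']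
    ring
  have hdenom : mc (α*β) 1 0 * τ + mc (α*β) 1 1
      = (mc α 1 0 * τ' + mc α 1 1) * (mc β 1 0 * τ + mc β 1 1) := by
    rw [mc_mul, mc_mul, hDD]; ring
  have hnum : mc (α*β) 0 0 * τ + mc (α*β) 0 1
      = (mc α 0 0 * τ' + mc α 0 1) * (mc β 1 0 * τ + mc β 1 1) := by
    rw [mc_mul, mc_mul, hτ'def]
    field_simp
    ring
  have hdαβ : mc (α*β) 1 0 * τ + mc (α*β) 1 1 ≠ 0 := by
    rw [hdenom]; exact mul_ne_zero hdα hdβ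
  have e1 : (mc (α*β) 0 0 * τ + mc (α*β) 0 1) / (mc (α*β) 1 0 * τ + mc (α*β) 1 1)
      = (mc α 0 0 * τ' + mc α 0 1) / (mc α 1 0 * τ' + mc α 1 1) := by
    rw [hnum, hdenom, mul_div_mul_right _ _ hdβ]
  have e2 : z / (mc (α*β) 1 0 * τ + mc (α*β) 1 1)
      = (z / (mc β 1 0 * τ + mc β 1 1)) / (mc α 1 0 * τ' + mc α 1 1) := by
    rw [hdenom, div_div]
    ring_nf
  rw [e1, e2, hα τ' (z / (mc β 1 0 * τ + mc β 1 1)) hτ']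
  have hb := hβ τ z hτ
  rw [← hτ'def] at hb
  rw [hb, ← mul_assoc, ← Complex.exp_add]
  congr 2
  have hkey : mc α 1 0 + mc β 1 0 * ((mc α 1 0 * τ' + mc α 1 1) * (mc β 1 0 * τ + mc β 1 1))
      = mc (α*β) 1 0 * (mc β 1 0 * τ + mc β 1 1) := by
    rw [hDD, mc_mul]
    linear_combination (-(mc α 1 0)) * hdetβ
  rw [hdenom, div_pow]
  rw [show 4 * (Real.pi:ℂ) * I * mc α 1 0 * (z^2 / (mc β 1 0 * τ + mc β 1 1)^2) /
        (mc α 1 0 * τ' + mc α 1 1) +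
        4 * (Real.pi:ℂ) * I * mc β 1 0 * z^2 / (mc β 1 0 * τ + mc β 1 1)
      = 4 * (Real.pi:ℂ) * I * z^2 *
          (mc α 1 0 + mc β 1 0 * ((mc α 1 0 * τ' + mc α 1 1) * (mc β 1 0 * τ + mc β 1 1))) /
          ((mc α 1 0 * τ' + mc α 1 1) * (mc β 1 0 * τ + mc β 1 1)^2) by
    field_simp]
  rw [hkey]
  field_simp

section Gen
open ModularGroup

lemma S4 : S * S * S * S = 1 := by
  have h : ((S * S * S * S : SL(2,ℤ)) : Matrix (Fin 2) (Fin 2) ℤ) = 1 := by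
    simp only [Matrix.SpecialLinearGroup.coe_mul]
    rw [show ((S:Matrix (Fin 2) (Fin 2) ℤ)) * S * S * S = ((S:Matrix (Fin 2) (Fin 2) ℤ) * S) *
      ((S:Matrix (Fin 2) (Fin 2) ℤ) * S) by noncomm_ring, S_mul_S_eq, neg_one_mul, neg_neg]
  exact Subtype.coe_injective (by simpa using h)

lemma Tzpow_mem (b : ℤ) : T ^ b ∈ Submonoid.closure ({S, T, T⁻¹} : Set (SL(2,ℤ))) := by
  have hT : T ∈ Submonoid.closure ({S, T, T⁻¹} : Set (SL(2,ℤ))) :=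
    Submonoid.subset_closure (by simp)
  have hTi : T⁻¹ ∈ Submonoid.closure ({S, T, T⁻¹} : Set (SL(2,ℤ))) :=
    Submonoid.subset_closure (by simp)
  rcases Int.natAbs_eq b with h | h
  · rw [h, zpow_natCast]; exact pow_mem hT _
  · rw [h, zpow_neg, zpow_natCast, ← inv_pow]; exact pow_mem hTi _

lemma mem_ST (γ : SL(2,ℤ)) : γ ∈ Submonoid.closure ({S, T, T⁻¹} : Set (SL(2,ℤ))) := by
  have hS : S ∈ Submonoid.closure ({S, T, T⁻¹} : Set (SL(2,ℤ))) :=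
    Submonoid.subset_closure (by simp)
  suffices H : ∀ n : ℕ, ∀ g : SL(2,ℤ), ((g : Matrix (Fin 2) (Fin 2) ℤ) 1 0).natAbs = n →
      g ∈ Submonoid.closure ({S, T, T⁻¹} : Set (SL(2,ℤ))) from H _ γ rfl
  intro n
  induction n using Nat.strong_induction_on with
  | _ n ih =>
  intro g hg
  by_cases hc : (g : Matrix (Fin 2) (Fin 2) ℤ) 1 0 = 0
  · -- g = ± T^b
    have hdet := g.2
    rw [Matrix.det_fin_two, hc, mul_zero, sub_zero] at hdet
    rcases Int.mul_eq_one_iff_eq_one_or_neg_one.mp hdet with ⟨ha, hd⟩ | ⟨ha, hd⟩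
    · have hgT : g = T ^ ((g : Matrix (Fin 2) (Fin 2) ℤ) 0 1) := by
        apply Subtype.coe_injective
        show (g : Matrix (Fin 2) (Fin 2) ℤ)
          = ((T ^ ((g : Matrix (Fin 2) (Fin 2) ℤ) 0 1) : SL(2,ℤ)) : Matrix (Fin 2) (Fin 2) ℤ)
        rw [coe_T_zpow]
        conv_lhs => rw [Matrix.eta_fin_two (g : Matrix (Fin 2) (Fin 2) ℤ)]
        rw [ha, hc, hd]
      rw [hgT]
      exact Tzpow_mem _
    · have hgT : g = S * S * T ^ (-((g : Matrix (Fin 2) (Fin 2) ℤ) 0 1)) := by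
        apply Subtype.coe_injective
        show (g : Matrix (Fin 2) (Fin 2) ℤ)
          = ((S * S * T ^ (-((g : Matrix (Fin 2) (Fin 2) ℤ) 0 1)) : SL(2,ℤ)) :
              Matrix (Fin 2) (Fin 2) ℤ)
        rw [Matrix.SpecialLinearGroup.coe_mul, Matrix.SpecialLinearGroup.coe_mul, S_mul_S_eq,
          coe_T_zpow, neg_one_mul]
        conv_lhs => rw [Matrix.eta_fin_two (g : Matrix (Fin 2) (Fin 2) ℤ)]
        rw [ha, hc, hd]
        ext i j
        fin_cases i <;> fin_cases j <;> simp
      rw [hgT]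
      exact mul_mem (mul_mem hS hS) (Tzpow_mem _)
  · set q : ℤ := (g : Matrix (Fin 2) (Fin 2) ℤ) 0 0 / (g : Matrix (Fin 2) (Fin 2) ℤ) 1 0 with hq
    set g' : SL(2,ℤ) := S * T ^ (-q) * g with hg'
    have hST : ((S : Matrix (Fin 2) (Fin 2) ℤ)) * ((T ^ (-q) : SL(2,ℤ)) : Matrix (Fin 2) (Fin 2) ℤ)
        = !![0, -1; 1, -q] := by
      rw [coe_S, coe_T_zpow]
      ext i j
      fin_cases i <;> fin_cases j <;> simp [Matrix.mul_apply, Fin.sum_univ_two]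
    have hentry : (g' : Matrix (Fin 2) (Fin 2) ℤ) 1 0
        = (g : Matrix (Fin 2) (Fin 2) ℤ) 0 0 - q * (g : Matrix (Fin 2) (Fin 2) ℤ) 1 0 := by
      rw [hg']
      rw [Matrix.SpecialLinearGroup.coe_mul, Matrix.SpecialLinearGroup.coe_mul, hST]
      simp [Matrix.mul_apply, Fin.sum_univ_two]
      ring
    have hlt : ((g' : Matrix (Fin 2) (Fin 2) ℤ) 1 0).natAbs < n := by
      rw [hentry]
      have : (g : Matrix (Fin 2) (Fin 2) ℤ) 0 0 - q * (g : Matrix (Fin 2) (Fin 2) ℤ) 1 0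
          = (g : Matrix (Fin 2) (Fin 2) ℤ) 0 0 % (g : Matrix (Fin 2) (Fin 2) ℤ) 1 0 := by
        rw [hq, Int.emod_def]; ring
      rw [this, ← hg]
      have h1 := Int.emod_nonneg ((g : Matrix (Fin 2) (Fin 2) ℤ) 0 0) hc
      have h2 := Int.emod_lt ((g : Matrix (Fin 2) (Fin 2) ℤ) 0 0) hc
      omega
    have hmem' := ih _ hlt g' rfl
    have hrec : g = T ^ q * (S * S * S) * g' := by
      rw [hg']
      rw [show T ^ q * (S * S * S) * (S * T ^ (-q) * g)
          = T ^ q * (S * S * S * S) * (T ^ (-q) * g) by group, S4, mul_one,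
        ← mul_assoc, ← zpow_add]
      norm_num
    rw [hrec]
    exact mul_mem (mul_mem (Tzpow_mem q) (mul_mem (mul_mem hS hS) hS)) hmem'

lemma JP_all (γ : SL(2,ℤ)) : JP γ := by
  refine Submonoid.closure_induction ?_ JP_one ?_ (mem_ST γ)
  · intro x hx
    simp only [Set.mem_insert_iff, Set.mem_singleton_iff] at hx
    rcases hx with rfl | rfl | rfl
    · exact JP_S
    · exact JP_T
    · exact JP_Tinv
  · intro x y _ _ hxP hyP
    exact JP_mul hxP hyP

end Gen

theorem Z3_jacobiForm :
    (∀ γ : Matrix.SpecialLinearGroup (Fin 2) ℤ, ∀ τ z : ℂ, 0 < τ.im →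
      (let a : ℂ := (((γ : Matrix (Fin 2) (Fin 2) ℤ) 0 0 : ℤ) : ℂ)
       let b : ℂ := (((γ : Matrix (Fin 2) (Fin 2) ℤ) 0 1 : ℤ) : ℂ)
       let c : ℂ := (((γ : Matrix (Fin 2) (Fin 2) ℤ) 1 0 : ℤ) : ℂ)
       let d : ℂ := (((γ : Matrix (Fin 2) (Fin 2) ℤ) 1 1 : ℤ) : ℂ)
       Z3 ((a * τ + b) / (c * τ + d)) (z / (c * τ + d))
         = Complex.exp (4 * Real.pi * I * c * z ^ 2 / (c * τ + d)) * Z3 τ z)) ∧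
    (∀ τ z : ℂ, 0 < τ.im → ∀ lam mu : ℤ,
      Z3 τ (z + (lam : ℂ) * τ + (mu : ℂ))
        = Complex.exp (-(4 * Real.pi * I) * ((lam : ℂ) ^ 2 * τ + 2 * (lam : ℂ) * z)) *
            Z3 τ z) := by
  constructor
  · intro γ τ z hτ
    exact JP_all γ τ z hτ
  · intro τ z hτ lam mu
    exact Z3_elliptic τ z lam mu
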